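/- Define the single-sample ranking-wise IPS value f_IPS(x,A,ω) := (π(A|x)/π₀(A|x)) · ∑_{a∈𝒜} C(ω,a)·R(ω,a), with the convention t/0 := 0, and define the expected total reward q(x,A) := E_{ω∼κ(x,A)}[∑_{a∈𝒜} C(ω,a)·R(ω,a)]. Then the bias of IPS over one logged sample equals minus the value of the unsupported rankings: E_{x∼p, A∼π₀(x), ω∼κ(x,A)}[f_IPS(x,A,ω)] − V(π) = − E_{x∼p}[ ∑_{A ∈ 𝒰₀(x)} π(A|x)·q(x,A) ], where 𝒰₀(x) := {A ∈ ℛ : π₀(A|x) = 0} is the set of rankings unsupported by the logging policy at context x. -/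
import Mathlib


open scoped BigOperators Classical

/-- Expectation of a real-valued function under a PMF on a finite type. -/
noncomputable def pexp {X : Type*} [Fintype X] (p : PMF X) (f : X → ℝ) : ℝ :=
  ∑ x, (p x).toReal * f x

/-- Variance of a real-valued function under a PMF on a finite type. -/
noncomputable def pvar {X : Type*} [Fintype X] (p : PMF X) (f : X → ℝ) : ℝ :=
  pexp p (fun x => (f x - pexp p f) ^ 2)

/-- Joint distribution of one logged sample (x, A, ω) with x ∼ p, A ∼ π₀(x), ω ∼ κ(x,A). -/
noncomputable def logged {𝒳 ℛ Ω : Type*} (p : PMF 𝒳) (π₀ : 𝒳 → PMF ℛ)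
    (κ : 𝒳 → ℛ → PMF Ω) : PMF (𝒳 × ℛ × Ω) :=
  p.bind fun x => (π₀ x).bind fun A => (κ x A).map fun ω => (x, A, ω)

/-- Click probability of action a at context x given ranking A: p_c(x,a,A). -/
noncomputable def pcA {𝒳 ℛ Ω 𝒜 : Type*} [Fintype Ω]
    (κ : 𝒳 → ℛ → PMF Ω) (C : Ω → 𝒜 → ℝ) (x : 𝒳) (a : 𝒜) (A : ℛ) : ℝ :=
  pexp (κ x A) fun ω => C ω a

/-- Marginalized click probability of action a at context x under policy μ: p_c(x,a,μ). -/
noncomputable def pcPol {𝒳 ℛ Ω 𝒜 : Type*} [Fintype Ω] [Fintype ℛ]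
    (κ : 𝒳 → ℛ → PMF Ω) (C : Ω → 𝒜 → ℝ) (μ : 𝒳 → PMF ℛ) (x : 𝒳) (a : 𝒜) : ℝ :=
  pexp (μ x) fun A => pcA κ C x a A

/-- Policy value V(π). -/
noncomputable def polValue {𝒳 ℛ Ω 𝒜 : Type*} [Fintype 𝒳] [Fintype ℛ] [Fintype Ω] [Fintype 𝒜]
    (p : PMF 𝒳) (π : 𝒳 → PMF ℛ) (κ : 𝒳 → ℛ → PMF Ω) (C R : Ω → 𝒜 → ℝ) : ℝ :=
  pexp p fun x => pexp (π x) fun A => pexp (κ x A) fun ω => ∑ a, C ω a * R ω a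

lemma pexp_bind {X Y : Type*} [Fintype X] [Fintype Y] (p : PMF X) (g : X → PMF Y)
    (f : Y → ℝ) : pexp (p.bind g) f = ∑ x, (p x).toReal * pexp (g x) f := by
  unfold pexp
  simp only [PMF.bind_apply, tsum_fintype, Finset.mul_sum]
  rw [Finset.sum_comm]
  refine Finset.sum_congr rfl fun y _ => ?_
  rw [ENNReal.toReal_sum (fun x _ => ENNReal.mul_ne_top (p.apply_ne_top x) ((g x).apply_ne_top y)),
    Finset.sum_mul]
  refine Finset.sum_congr rfl fun x _ => ?_
  rw [ENNReal.toReal_mul, mul_assoc]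

lemma pexp_pure {X : Type*} [Fintype X] (a : X) (f : X → ℝ) :
    pexp (PMF.pure a) f = f a := by
  unfold pexp
  rw [Finset.sum_eq_single a] <;> simp +contextual [PMF.pure_apply, eq_comm]

lemma pexp_map {X Y : Type*} [Fintype X] [Fintype Y] (p : PMF X) (e : X → Y)
    (f : Y → ℝ) : pexp (p.map e) f = pexp p (fun x => f (e x)) := by
  rw [PMF.map, pexp_bind]
  exact Finset.sum_congr rfl fun x _ => by
    rw [show pexp ((PMF.pure ∘ e) x) f = f (e x) from pexp_pure (e x) f]

/-- Bias of ranking-wise IPS under violated common support equals minus the value of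
the unsupported rankings. -/
theorem bias_of_IPS {𝒳 ℛ Ω 𝒜 : Type*}
    [Fintype 𝒳] [Nonempty 𝒳] [Fintype ℛ] [Nonempty ℛ] [Fintype Ω] [Nonempty Ω] [Fintype 𝒜]
    (p : PMF 𝒳) (π π₀ : 𝒳 → PMF ℛ) (κ : 𝒳 → ℛ → PMF Ω)
    (C R : Ω → 𝒜 → ℝ) (hC : ∀ ω a, C ω a = 0 ∨ C ω a = 1) :
    pexp (logged p π₀ κ)
        (fun s => ((π s.1 s.2.1).toReal / (π₀ s.1 s.2.1).toReal) *
          ∑ a, C s.2.2 a * R s.2.2 a)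
      - polValue p π κ C R
    = - pexp p (fun x =>
        ∑ A ∈ Finset.univ.filter (fun A => π₀ x A = 0),
          (π x A).toReal * pexp (κ x A) (fun ω => ∑ a, C ω a * R ω a)) := by
  have hpm : ∀ x A, pexp ((κ x A).map fun ω => (x, A, ω))
      (fun s : 𝒳 × ℛ × Ω => ((π s.1 s.2.1).toReal / (π₀ s.1 s.2.1).toReal) *
        ∑ a, C s.2.2 a * R s.2.2 a)
      = ((π x A).toReal / (π₀ x A).toReal) *
        pexp (κ x A) (fun ω => ∑ a, C ω a * R ω a) := by
    intro x A
    rw [pexp_map]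
    unfold pexp
    rw [Finset.mul_sum]
    exact Finset.sum_congr rfl fun ω _ => by ring
  have expand : polValue p π κ C R = ∑ x, (p x).toReal * ∑ A, (π x A).toReal *
      pexp (κ x A) (fun ω => ∑ a, C ω a * R ω a) := rfl
  have expand2 : pexp p (fun x =>
        ∑ A ∈ Finset.univ.filter (fun A => π₀ x A = 0),
          (π x A).toReal * pexp (κ x A) (fun ω => ∑ a, C ω a * R ω a))
      = ∑ x, (p x).toReal * ∑ A ∈ Finset.univ.filter (fun A => π₀ x A = 0),
          (π x A).toReal * pexp (κ x A) (fun ω => ∑ a, C ω a * R ω a) := rfl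
  unfold logged
  rw [pexp_bind]
  simp only [pexp_bind, hpm]
  rw [expand, expand2, ← Finset.sum_sub_distrib, ← Finset.sum_neg_distrib]
  refine Finset.sum_congr rfl fun x _ => ?_
  rw [← mul_sub, ← mul_neg]
  congr 1
  set Q : ℛ → ℝ := fun A => pexp (κ x A) (fun ω => ∑ a, C ω a * R ω a) with hQ
  have key : (∑ A, (π₀ x A).toReal * (((π x A).toReal / (π₀ x A).toReal) * Q A))
      = ∑ A ∈ Finset.univ.filter (fun A => ¬ π₀ x A = 0), (π x A).toReal * Q A := by
    rw [← Finset.sum_filter_add_sum_filter_not Finset.univ (fun A => π₀ x A = 0)]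
    rw [Finset.sum_eq_zero (fun A hA => by
      simp only [Finset.mem_filter] at hA
      simp [hA.2]), zero_add]
    refine Finset.sum_congr rfl fun A hA => ?_
    simp only [Finset.mem_filter] at hA
    have h0 : (π₀ x A).toReal ≠ 0 := by
      rw [ENNReal.toReal_ne_zero]
      exact ⟨hA.2, (π₀ x).apply_ne_top A⟩
    field_simp
  rw [key]
  have hsplit : (∑ A, (π x A).toReal * Q A)
      = (∑ A ∈ Finset.univ.filter (fun A => π₀ x A = 0), (π x A).toReal * Q A)
      + ∑ A ∈ Finset.univ.filter (fun A => ¬ π₀ x A = 0), (π x A).toReal * Q A :=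
    (Finset.sum_filter_add_sum_filter_not Finset.univ _ _).symm
  rw [hsplit]
  ring
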